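/- Let $F(x,y) = \sqrt{x(x+y)} + \sqrt{(1-x)(1-x-y)} - 1$. For any fixed $y \in (0, 3/4)$ and any $x \in [y/3, 1-y]$, one has $F(x,y) \leq -\frac{1}{16} y^2$. -/
import Mathlib


open Real

lemma sqrt_sub_le_aux (A B : ℝ) (hA : 0 < A) (hB : 0 ≤ B) (h : B / (2 * A) ≤ A) :
    Real.sqrt (A ^ 2 - B) ≤ A - B / (2 * A) := by
  have h1 : A ^ 2 - B ≤ (A - B / (2 * A)) ^ 2 := by
    have hA' : A ≠ 0 := ne_of_gt hA
    have he : (A - B / (2 * A)) ^ 2 = A ^ 2 - B + (B / (2 * A)) ^ 2 := by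
      field_simp; ring
    nlinarith [sq_nonneg (B / (2 * A))]
  calc Real.sqrt (A ^ 2 - B) ≤ Real.sqrt ((A - B / (2 * A)) ^ 2) := Real.sqrt_le_sqrt h1
    _ = A - B / (2 * A) := by rw [Real.sqrt_sq (by linarith)]

/-- For `0 < y < 3/4` and `y/3 ≤ x ≤ 1 - y`, one has
`√(x(x+y)) + √((1-x)(1-x-y)) - 1 ≤ -y²/16`. -/
theorem F_le_of_middle_range (x y : ℝ) (hy0 : 0 < y) (hy1 : y < 3 / 4)
    (hx0 : y / 3 ≤ x) (hx1 : x ≤ 1 - y) :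
    Real.sqrt (x * (x + y)) + Real.sqrt ((1 - x) * (1 - x - y)) - 1 ≤ -(1 / 16) * y ^ 2 := by
  set A1 := x + y / 2 with hA1def
  set A2 := 1 - x - y / 2 with hA2def
  have hA1 : 0 < A1 := by simp only [hA1def]; linarith
  have hA2 : 0 < A2 := by simp only [hA2def]; linarith
  have hB : (0:ℝ) ≤ y ^ 2 / 4 := by positivity
  have hc1 : y ^ 2 / 4 / (2 * A1) ≤ A1 := by
    rw [div_le_iff₀ (by linarith)]
    simp only [hA1def]; nlinarith
  have hc2 : y ^ 2 / 4 / (2 * A2) ≤ A2 := by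
    rw [div_le_iff₀ (by linarith)]
    simp only [hA2def]; nlinarith
  have e1 : x * (x + y) = A1 ^ 2 - y ^ 2 / 4 := by simp only [hA1def]; ring
  have e2 : (1 - x) * (1 - x - y) = A2 ^ 2 - y ^ 2 / 4 := by simp only [hA2def]; ring
  have h1 := sqrt_sub_le_aux A1 (y ^ 2 / 4) hA1 hB hc1
  have h2 := sqrt_sub_le_aux A2 (y ^ 2 / 4) hA2 hB hc2
  rw [← e1] at h1
  rw [← e2] at h2
  -- A1 ≤ 1, so y²/4/(2 A1) ≥ y²/8 ≥ y²/16 ; the other term is nonneg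
  have hA1le : A1 ≤ 1 := by simp only [hA1def]; linarith
  have hd1 : y ^ 2 / 8 ≤ y ^ 2 / 4 / (2 * A1) := by
    rw [div_le_div_iff₀ (by norm_num) (by linarith)]
    nlinarith
  have hd2 : 0 ≤ y ^ 2 / 4 / (2 * A2) := by positivity
  have hsum : A1 + A2 = 1 := by simp only [hA1def, hA2def]; ring
  nlinarith [sq_nonneg y]
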